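/- Fix an integer m > 1. For every nonnegative integer i and every j with 0 ≤ j ≤ m−1, the number of gap-free m-ary partitions satisfies c(m·(m·i + j) + 1) ≡ 1 + j·c(m·i + 1) (mod m). -/

import Mathlib

/-- The number of gap-free `m`-ary partitions of `n`: partitions of `n` all of whose
parts are powers of `m`, such that whenever `m^(k+1)` occurs as a part, so does `m^k`. -/
noncomputable def gapFreeMaryPartitions (m n : ℕ) : ℕ :=
  Nat.card {p : n.Partition //
    (∀ x ∈ p.parts, ∃ k : ℕ, x = m ^ k) ∧
    ∀ k : ℕ, m ^ (k + 1) ∈ p.parts → m ^ k ∈ p.parts}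

namespace GFAux

def GF (m : ℕ) {n : ℕ} (p : n.Partition) : Prop :=
  (∀ x ∈ p.parts, ∃ k : ℕ, x = m ^ k) ∧ ∀ k : ℕ, m ^ (k + 1) ∈ p.parts → m ^ k ∈ p.parts

lemma gap_eq (m n : ℕ) : gapFreeMaryPartitions m n = Nat.card {p : n.Partition // GF m p} := rfl

variable {m : ℕ}

lemma pow_mem_one_mem {n : ℕ} {p : n.Partition}
    (h2 : ∀ k : ℕ, m ^ (k + 1) ∈ p.parts → m ^ k ∈ p.parts) :
    ∀ k : ℕ, m ^ k ∈ p.parts → 1 ∈ p.parts := by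
  intro k
  induction k with
  | zero => simpa using id
  | succ k ih => intro h; exact ih (h2 k h)

lemma one_mem {n : ℕ} (hn : n ≠ 0) {p : n.Partition} (hp : GF m p) : 1 ∈ p.parts := by
  have hne : p.parts ≠ 0 := by
    intro h
    exact hn (by rw [← p.parts_sum, h]; rfl)
  obtain ⟨x, hx⟩ := Multiset.exists_mem_of_ne_zero hne
  obtain ⟨k, rfl⟩ := hp.1 x hx
  exact pow_mem_one_mem hp.2 k hx

lemma count_one_modeq (hm : 1 < m) {n : ℕ} (p : n.Partition)
    (h1 : ∀ x ∈ p.parts, ∃ k : ℕ, x = m ^ k) :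
    p.parts.count 1 ≡ n [MOD m] := by
  have hsplit : p.parts.filter (· = 1) + p.parts.filter (¬ · = 1) = p.parts :=
    Multiset.filter_add_not _ _
  have hdvd : m ∣ (p.parts.filter (¬ · = 1)).sum := by
    apply Multiset.dvd_sum
    intro x hx
    rw [Multiset.mem_filter] at hx
    obtain ⟨k, rfl⟩ := h1 x hx.1
    cases k with
    | zero => simp at hx
    | succ k => exact dvd_pow_self m (Nat.succ_ne_zero k)
  have hfil : (p.parts.filter (· = 1)).sum = p.parts.count 1 := by
    rw [Multiset.filter_eq']
    simp
  have hsum : p.parts.count 1 + (p.parts.filter (¬ · = 1)).sum = n := by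
    rw [← hfil, ← Multiset.sum_add, hsplit, p.parts_sum]
  obtain ⟨M, hM⟩ := hdvd
  have h0 : m * M ≡ 0 [MOD m] := (Nat.modEq_zero_iff_dvd).2 ⟨M, rfl⟩
  calc p.parts.count 1 = p.parts.count 1 + 0 := by omega
    _ ≡ p.parts.count 1 + m * M [MOD m] := Nat.ModEq.add_left _ h0.symm
    _ = n := by omega

def eraseOnePart {n : ℕ} (p : (n + 1).Partition) (h1 : 1 ∈ p.parts) : n.Partition where
  parts := p.parts.erase 1
  parts_pos := fun hi => p.parts_pos (Multiset.mem_of_mem_erase hi)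
  parts_sum := by
    have hs := p.parts_sum
    rw [← Multiset.cons_erase h1, Multiset.sum_cons] at hs
    omega

def consOnePart {n : ℕ} (q : n.Partition) : (n + 1).Partition where
  parts := 1 ::ₘ q.parts
  parts_pos := fun hi => by
    rcases Multiset.mem_cons.1 hi with h | h
    · omega
    · exact q.parts_pos h
  parts_sum := by rw [Multiset.sum_cons, q.parts_sum]; omega

lemma GF_cons (hm : 1 < m) {n : ℕ} {q : n.Partition} (hq : GF m q) : GF m (consOnePart q) := by
  constructor
  · intro x hx
    rcases Multiset.mem_cons.1 hx with h | h
    · exact ⟨0, by simpa using h⟩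
    · exact hq.1 x h
  · intro k hk
    rcases Multiset.mem_cons.1 hk with h | h
    · exact absurd h (Nat.one_lt_pow (Nat.succ_ne_zero k) hm).ne'
    · exact Multiset.mem_cons_of_mem (hq.2 k h)

lemma GF_erase (hm : 1 < m) {n : ℕ} {p : (n + 1).Partition} (hp : GF m p)
    (h1 : 1 ∈ p.parts) (h2 : 1 ∈ p.parts.erase 1) :
    GF m (eraseOnePart p h1) := by
  constructor
  · intro x hx
    exact hp.1 x (Multiset.mem_of_mem_erase hx)
  · intro k hk
    have hmem : m ^ k ∈ p.parts := hp.2 k (Multiset.mem_of_mem_erase hk)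
    cases k with
    | zero => rw [pow_zero]; exact h2
    | succ k =>
        have : (m : ℕ) ^ (k + 1) ≠ 1 := (Nat.one_lt_pow (Nat.succ_ne_zero k) hm).ne'
        exact (Multiset.mem_erase_of_ne this).2 hmem

lemma two_le_count (hm : 1 < m) {n : ℕ} {p : (n + 1).Partition} (hp : GF m p)
    (hmod : (n + 1) % m ≠ 1) : 1 ∈ p.parts.erase 1 := by
  have h1 : 1 ∈ p.parts := one_mem (Nat.succ_ne_zero n) hp
  have hc := count_one_modeq hm p hp.1
  have hc1 : 1 ≤ p.parts.count 1 := Multiset.one_le_count_iff_mem.2 h1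
  have hne : p.parts.count 1 ≠ 1 := by
    intro h
    rw [h] at hc
    unfold Nat.ModEq at hc
    rw [Nat.mod_eq_of_lt hm] at hc
    exact hmod hc.symm
  rw [← Multiset.count_pos, Multiset.count_erase_self]
  omega

lemma c_succ (hm : 1 < m) {n : ℕ} (hmod : (n + 1) % m ≠ 1) :
    gapFreeMaryPartitions m (n + 1) = gapFreeMaryPartitions m n := by
  rw [gap_eq, gap_eq]
  apply Nat.card_congr
  refine ⟨fun p => ⟨eraseOnePart p.1 (one_mem (Nat.succ_ne_zero n) p.2),
      GF_erase hm p.2 _ (two_le_count hm p.2 hmod)⟩,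
    fun q => ⟨consOnePart q.1, GF_cons hm q.2⟩, ?_, ?_⟩
  · intro p
    apply Subtype.ext
    apply Nat.Partition.ext
    show 1 ::ₘ (p.1.parts.erase 1) = p.1.parts
    exact Multiset.cons_erase (one_mem (Nat.succ_ne_zero n) p.2)
  · intro q
    apply Subtype.ext
    apply Nat.Partition.ext
    show (1 ::ₘ q.1.parts).erase 1 = q.1.parts
    exact Multiset.erase_cons_head 1 q.1.parts
lemma pow_div_m (hm : 1 < m) (k : ℕ) : m ^ (k + 1) / m = m ^ k := by
  rw [pow_succ, Nat.mul_div_cancel _ (by omega)]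

lemma sum_map_mul (s : Multiset ℕ) : (s.map (fun i => m * i)).sum = m * s.sum := by
  simpa using Multiset.sum_map_mul_left (s := s) (a := m) (f := id)

lemma map_mul_div_cancel (hm : 0 < m) {s : Multiset ℕ} (h : ∀ x ∈ s, m ∣ x) :
    (s.map (· / m)).map (fun i => m * i) = s := by
  rw [Multiset.map_map]
  conv_rhs => rw [← Multiset.map_id s]
  apply Multiset.map_congr rfl
  intro x hx
  exact Nat.mul_div_cancel' (h x hx)

lemma erase_parts_pow (hm : 1 < m) {n : ℕ} {p : n.Partition} (hp : GF m p)
    (hc : p.parts.count 1 = 1) : ∀ x ∈ p.parts.erase 1, ∃ k, x = m ^ (k + 1) := by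
  intro x hx
  obtain ⟨k, rfl⟩ := hp.1 x (Multiset.mem_of_mem_erase hx)
  cases k with
  | zero =>
      exfalso
      have h0 : 0 < (p.parts.erase 1).count 1 := Multiset.count_pos.2 (by simpa using hx)
      rw [Multiset.count_erase_self, hc] at h0
      omega
  | succ k => exact ⟨k, rfl⟩

lemma erase_sum {c : ℕ} {p : (c + 1).Partition} (h1 : 1 ∈ p.parts) :
    (p.parts.erase 1).sum = c := by
  have hs := p.parts_sum
  rw [← Multiset.cons_erase h1, Multiset.sum_cons] at hs
  omega

def shrink (hm : 1 < m) {t : ℕ} (p : (m * t + 1).Partition) (hp : GF m p)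
    (hc : p.parts.count 1 = 1) : t.Partition where
  parts := (p.parts.erase 1).map (· / m)
  parts_pos := by
    intro i hi
    obtain ⟨x, hx, rfl⟩ := Multiset.mem_map.1 hi
    obtain ⟨k, rfl⟩ := erase_parts_pow hm hp hc x hx
    rw [pow_div_m hm]
    exact pow_pos (by omega) k
  parts_sum := by
    have h1 : 1 ∈ p.parts := by rw [← Multiset.count_pos, hc]; omega
    have hdvd : ∀ x ∈ p.parts.erase 1, m ∣ x := by
      intro x hx
      obtain ⟨k, rfl⟩ := erase_parts_pow hm hp hc x hx
      exact dvd_pow_self m (Nat.succ_ne_zero k)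
    have hsum : m * ((p.parts.erase 1).map (· / m)).sum = m * t := by
      rw [← sum_map_mul, map_mul_div_cancel (by omega) hdvd, erase_sum h1]
    exact Nat.eq_of_mul_eq_mul_left (by omega) hsum

def expand (hm : 1 < m) {t : ℕ} (q : t.Partition) : (m * t + 1).Partition where
  parts := 1 ::ₘ q.parts.map (fun i => m * i)
  parts_pos := by
    intro i hi
    rcases Multiset.mem_cons.1 hi with h | h
    · omega
    · obtain ⟨y, hy, rfl⟩ := Multiset.mem_map.1 h
      exact Nat.mul_pos (by omega) (q.parts_pos hy)
  parts_sum := by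
    rw [Multiset.sum_cons, sum_map_mul, q.parts_sum]
    omega

lemma GF_shrink (hm : 1 < m) {t : ℕ} {p : (m * t + 1).Partition} (hp : GF m p)
    (hc : p.parts.count 1 = 1) : GF m (shrink hm p hp hc) := by
  constructor
  · intro x hx
    obtain ⟨y, hy, rfl⟩ := Multiset.mem_map.1 hx
    obtain ⟨k, rfl⟩ := erase_parts_pow hm hp hc y hy
    exact ⟨k, pow_div_m hm k⟩
  · intro k hk
    obtain ⟨y, hy, hyk⟩ := Multiset.mem_map.1 hk
    obtain ⟨j, rfl⟩ := erase_parts_pow hm hp hc y hy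
    rw [pow_div_m hm] at hyk
    have hj : j = k + 1 := Nat.pow_right_injective hm hyk
    subst hj
    have h2 : m ^ (k + 1) ∈ p.parts := hp.2 (k + 1) (Multiset.mem_of_mem_erase hy)
    have h3 : m ^ (k + 1) ∈ p.parts.erase 1 :=
      (Multiset.mem_erase_of_ne (Nat.one_lt_pow (Nat.succ_ne_zero k) hm).ne').2 h2
    exact Multiset.mem_map.2 ⟨m ^ (k + 1), h3, pow_div_m hm k⟩

lemma GF_expand (hm : 1 < m) {t : ℕ} (q : t.Partition) (hq : GF m q) :
    GF m (expand hm q) := by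
  constructor
  · intro x hx
    rcases Multiset.mem_cons.1 hx with h | h
    · exact ⟨0, by simpa using h⟩
    · obtain ⟨y, hy, rfl⟩ := Multiset.mem_map.1 h
      obtain ⟨k, rfl⟩ := hq.1 y hy
      exact ⟨k + 1, by rw [pow_succ']⟩
  · intro k hk
    rcases Multiset.mem_cons.1 hk with h | h
    · exact absurd h (Nat.one_lt_pow (Nat.succ_ne_zero k) hm).ne'
    · obtain ⟨y, hy, hyk⟩ := Multiset.mem_map.1 h
      obtain ⟨j, rfl⟩ := hq.1 y hy
      rw [← pow_succ'] at hyk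
      obtain rfl : k = j := by
        have := Nat.pow_right_injective hm hyk
        omega
      cases k with
      | zero => exact Multiset.mem_cons.2 (Or.inl (by simp))
      | succ k' =>
          exact Multiset.mem_cons_of_mem
            (Multiset.mem_map.2 ⟨m ^ k', hq.2 k' hy, by rw [← pow_succ']⟩)

lemma count_expand (hm : 1 < m) {t : ℕ} (q : t.Partition) :
    (expand hm q).parts.count 1 = 1 := by
  show (1 ::ₘ q.parts.map (fun i => m * i)).count 1 = 1
  rw [Multiset.count_cons_self]
  have h0 : (q.parts.map (fun i => m * i)).count 1 = 0 := by
    rw [Multiset.count_eq_zero]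
    intro h
    obtain ⟨y, hy, hy1⟩ := Multiset.mem_map.1 h
    have h2 : m ≤ m * y := Nat.le_mul_of_pos_right m (q.parts_pos hy)
    omega
  omega

lemma c_split (hm : 1 < m) {t : ℕ} (ht : t ≠ 0) :
    gapFreeMaryPartitions m (m * t + 1)
      = gapFreeMaryPartitions m (m * t) + gapFreeMaryPartitions m t := by
  classical
  rw [gap_eq, gap_eq, gap_eq]
  have hmt : m * t ≠ 0 := Nat.mul_ne_zero (by omega) ht
  have e0 : {p : (m * t + 1).Partition // GF m p}
      ≃ {x : {p : (m * t + 1).Partition // GF m p} // ¬ x.1.parts.count 1 = 1}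
        ⊕ {x : {p : (m * t + 1).Partition // GF m p} // x.1.parts.count 1 = 1} :=
    (Equiv.sumCompl _).symm.trans (Equiv.sumComm _ _)
  rw [Nat.card_congr e0, Nat.card_sum]
  congr 1
  · apply Nat.card_congr
    have h1 : ∀ x : {p : (m * t + 1).Partition // GF m p}, 1 ∈ x.1.parts :=
      fun x => one_mem (by omega) x.2
    refine ⟨?_, ?_, ?_, ?_⟩
    · intro x
      have h2 : 1 ∈ x.1.1.parts.erase 1 := by
        have hc1 : 0 < x.1.1.parts.count 1 := Multiset.count_pos.2 (h1 x.1)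
        have hne := x.2
        rw [← Multiset.count_pos, Multiset.count_erase_self]
        omega
      exact ⟨eraseOnePart x.1.1 (h1 x.1), GF_erase hm x.1.2 (h1 x.1) h2⟩
    · intro q
      refine ⟨⟨consOnePart q.1, GF_cons hm q.2⟩, ?_⟩
      have h1q : 1 ∈ q.1.parts := one_mem hmt q.2
      have hcq : 0 < q.1.parts.count 1 := Multiset.count_pos.2 h1q
      show ¬ (1 ::ₘ q.1.parts).count 1 = 1
      rw [Multiset.count_cons_self]
      omega
    · intro x
      apply Subtype.ext
      apply Subtype.ext
      apply Nat.Partition.ext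
      show 1 ::ₘ (x.1.1.parts.erase 1) = x.1.1.parts
      exact Multiset.cons_erase (h1 x.1)
    · intro q
      apply Subtype.ext
      apply Nat.Partition.ext
      show (1 ::ₘ q.1.parts).erase 1 = q.1.parts
      exact Multiset.erase_cons_head 1 q.1.parts
  · apply Nat.card_congr
    refine ⟨fun x => ⟨shrink hm x.1.1 x.1.2 x.2, GF_shrink hm x.1.2 x.2⟩,
      fun q => ⟨⟨expand hm q.1, GF_expand hm q.1 q.2⟩, count_expand hm q.1⟩, ?_, ?_⟩
    · intro x
      apply Subtype.ext
      apply Subtype.ext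
      apply Nat.Partition.ext
      show 1 ::ₘ ((x.1.1.parts.erase 1).map (· / m)).map (fun i => m * i) = x.1.1.parts
      rw [map_mul_div_cancel (by omega) (fun y hy => by
        obtain ⟨k, rfl⟩ := erase_parts_pow hm x.1.2 x.2 y hy
        exact dvd_pow_self m (Nat.succ_ne_zero k))]
      exact Multiset.cons_erase (by rw [← Multiset.count_pos, x.2]; omega)
    · intro q
      apply Subtype.ext
      apply Nat.Partition.ext
      show ((1 ::ₘ q.1.parts.map (fun i => m * i)).erase 1).map (· / m) = q.1.parts
      rw [Multiset.erase_cons_head, Multiset.map_map]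
      conv_rhs => rw [← Multiset.map_id q.1.parts]
      apply Multiset.map_congr rfl
      intro x hx
      exact Nat.mul_div_cancel_left x (by omega)
lemma c_one (hm : 1 < m) : gapFreeMaryPartitions m 1 = 1 := by
  rw [gap_eq]
  have hGF : ∀ p : Nat.Partition 1, GF m p := by
    intro p
    constructor
    · intro x hx
      rw [Nat.Partition.partition_one_parts] at hx
      exact ⟨0, by rw [pow_zero]; simpa using hx⟩
    · intro k hk
      rw [Nat.Partition.partition_one_parts] at hk
      have h1 : (m : ℕ) ^ (k + 1) = 1 := by simpa using hk
      exact absurd h1 (Nat.one_lt_pow (Nat.succ_ne_zero k) hm).ne'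
  haveI : Unique {p : Nat.Partition 1 // GF m p} :=
    ⟨⟨⟨default, hGF _⟩⟩, fun a => Subtype.ext (Subsingleton.elim _ _)⟩
  exact Nat.card_unique

lemma c_shift (hm : 1 < m) (t : ℕ) : ∀ r, 1 ≤ r → r ≤ m →
    gapFreeMaryPartitions m (m * t + r) = gapFreeMaryPartitions m (m * t + 1) := by
  intro r
  induction r with
  | zero => omega
  | succ r ih =>
      intro _ h2
      rcases Nat.lt_or_ge r 1 with h0 | h0
      · obtain rfl : r = 0 := by omega
        rfl
      · have hmod : (m * t + r + 1) % m ≠ 1 := by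
          have heq : (m * t + (r + 1)) % m = (r + 1) % m := by
            rw [Nat.add_comm, Nat.add_mul_mod_self_left]
          rcases Nat.eq_or_lt_of_le h2 with he | hl
          · rw [show m * t + r + 1 = m * t + (r + 1) from rfl, heq, he, Nat.mod_self]
            omega
          · rw [show m * t + r + 1 = m * t + (r + 1) from rfl, heq,
              Nat.mod_eq_of_lt hl]
            omega
        calc gapFreeMaryPartitions m (m * t + (r + 1))
            = gapFreeMaryPartitions m (m * t + r) := c_succ hm hmod
          _ = gapFreeMaryPartitions m (m * t + 1) := ih h0 (by omega)

lemma g_succ (hm : 1 < m) (t : ℕ) :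
    gapFreeMaryPartitions m (m * (t + 1) + 1)
      = gapFreeMaryPartitions m (m * t + 1) + gapFreeMaryPartitions m (t + 1) := by
  rw [c_split hm (Nat.succ_ne_zero t)]
  congr 1
  rw [show m * (t + 1) = m * t + m by ring]
  exact c_shift hm t m (by omega) (le_refl m)

lemma slice (hm : 1 < m) (i : ℕ) : ∀ j, j ≤ m - 1 →
    gapFreeMaryPartitions m (m * (m * i + j) + 1)
      = gapFreeMaryPartitions m (m * (m * i) + 1)
        + j * gapFreeMaryPartitions m (m * i + 1) := by
  intro j
  induction j with
  | zero => intro _; simp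
  | succ j ih =>
      intro hj
      have h1 : m * (m * i + (j + 1)) + 1 = m * ((m * i + j) + 1) + 1 := by ring
      rw [h1, g_succ hm, ih (by omega)]
      have h2 : gapFreeMaryPartitions m (m * i + j + 1)
          = gapFreeMaryPartitions m (m * i + 1) :=
        c_shift hm i (j + 1) (by omega) (by omega)
      rw [h2]
      ring

lemma gm1 (hm : 1 < m) : ∀ i,
    gapFreeMaryPartitions m (m * (m * i) + 1) ≡ 1 [MOD m] := by
  intro i
  induction i with
  | zero =>
      simp only [Nat.mul_zero, Nat.zero_add]
      rw [c_one hm]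
  | succ i ih =>
      have e1 : m * (m * (i + 1)) + 1 = m * ((m * i + (m - 1)) + 1) + 1 := by
        have e2 : m * i + (m - 1) + 1 = m * (i + 1) := by rw [Nat.mul_succ]; omega
        rw [e2]
      rw [e1, g_succ hm (m * i + (m - 1)), slice hm i (m - 1) (le_refl _)]
      have h2 : gapFreeMaryPartitions m (m * i + (m - 1) + 1)
          = gapFreeMaryPartitions m (m * i + 1) := by
        rw [show m * i + (m - 1) + 1 = m * i + m by omega]
        exact c_shift hm i m (by omega) (le_refl m)
      rw [h2]
      have h3 : (m - 1) * gapFreeMaryPartitions m (m * i + 1)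
            + gapFreeMaryPartitions m (m * i + 1)
          = m * gapFreeMaryPartitions m (m * i + 1) := by
        rw [Nat.sub_one_mul]
        exact Nat.sub_add_cancel (Nat.le_mul_of_pos_left _ (by omega))
      rw [add_assoc, h3]
      unfold Nat.ModEq at ih ⊢
      rw [Nat.add_mul_mod_self_left]
      exact ih

end GFAux

theorem gapFree_mod_m (m : ℕ) (hm : 1 < m) (i j : ℕ) (hj : j ≤ m - 1) :
    gapFreeMaryPartitions m (m * (m * i + j) + 1) ≡
      1 + j * gapFreeMaryPartitions m (m * i + 1) [MOD m] := by
  rw [GFAux.slice hm i j hj]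
  exact Nat.ModEq.add_right _ (GFAux.gm1 hm i)
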